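/- Let Ω ⊆ ℝ^N, let p, q : Ω → (1,∞) be measurable with p(x) < q(x), and let μ : Ω → [0,∞) be measurable. Let ε > 0. Then there exists δ > 0 such that for all s, t ≥ 0 with |t − s| > ε·max{t,s} and almost all x ∈ Ω: ((t+s)/2)^{p(x)} + μ(x)·((t+s)/2)^{q(x)} ≤ (1 − δ)·[ (t^{p(x)} + μ(x)t^{q(x)} + s^{p(x)} + μ(x)s^{q(x)}) / 2 ], provided 1 < p_- := inf p and 1 < q_- := inf q. -/

import Mathlib

open MeasureTheory

section DoublePhaseAux
open Set

/-- Uniform strict convexity of `u ↦ u^r` on `[0,1-ε]`, uniform in `r ≥ r₀ > 1`. -/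
lemma key_unif (r₀ ε : ℝ) (hr₀ : 1 < r₀) (hε : 0 < ε) (hε2 : ε ≤ 1/2) :
    ∃ δ : ℝ, 0 < δ ∧ δ ≤ 1/2 ∧ ∀ r : ℝ, r₀ ≤ r → ∀ u : ℝ, 0 ≤ u → u ≤ 1 - ε →
      ((1 + u)/2) ^ r ≤ (1 - δ) * ((1 + u ^ r)/2) := by
  obtain ⟨n, hn⟩ := exists_pow_lt_of_lt_one (by norm_num : (0:ℝ) < 1/4)
    (by linarith : 1 - ε/2 < 1)
  set R : ℝ := max r₀ n with hR
  set K : Set (ℝ × ℝ) := Icc r₀ R ×ˢ Icc (0:ℝ) (1 - ε) with hK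
  have hKc : IsCompact K := (isCompact_Icc).prod isCompact_Icc
  have hKne : K.Nonempty := by
    refine ⟨(r₀, 0), ?_⟩
    simp only [hK, mem_prod, mem_Icc]
    exact ⟨⟨le_refl _, le_max_left _ _⟩, le_refl _, by linarith⟩
  set G : ℝ × ℝ → ℝ := fun z => (1 + z.2 ^ z.1)/2 - ((1 + z.2)/2) ^ z.1 with hG
  have hGcont : ContinuousOn G K := by
    have h1 : ContinuousOn (fun z : ℝ × ℝ => z.2 ^ z.1) K := by
      intro z hz
      apply ContinuousAt.continuousWithinAt
      exact ContinuousAt.rpow (by fun_prop) (by fun_prop)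
        (Or.inr (lt_of_lt_of_le (by linarith) hz.1.1))
    have h2 : ContinuousOn (fun z : ℝ × ℝ => ((1 + z.2)/2) ^ z.1) K := by
      intro z hz
      apply ContinuousAt.continuousWithinAt
      have hz2 : (0:ℝ) ≤ z.2 := hz.2.1
      have hb : ((1 + z.2)/2 : ℝ) ≠ 0 := by intro h; nlinarith
      exact ContinuousAt.rpow (by fun_prop) (by fun_prop) (Or.inl hb)
    exact ((continuousOn_const.add h1).div_const 2).sub h2
  obtain ⟨z₀, hz₀K, hz₀min⟩ := hKc.exists_isMinOn hKne hGcont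
  have hz₀pos : 0 < G z₀ := by
    have hu0 : 0 ≤ z₀.2 := hz₀K.2.1
    have hu1 : z₀.2 ≤ 1 - ε := hz₀K.2.2
    have hr1 : 1 < z₀.1 := lt_of_lt_of_le hr₀ hz₀K.1.1
    have hsc := (strictConvexOn_rpow hr1).2 (mem_Ici.mpr hu0)
      (mem_Ici.mpr (by norm_num : (0:ℝ) ≤ 1)) (by intro h; rw [h] at hu1; linarith)
      (by norm_num : (0:ℝ) < 1/2) (by norm_num : (0:ℝ) < 1/2) (by norm_num)
    simp only [smul_eq_mul, Real.one_rpow] at hsc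
    have h1 : (1/2 : ℝ) * z₀.2 + (1/2 : ℝ) * 1 = (1 + z₀.2)/2 := by ring
    rw [h1] at hsc
    simp only [hG]
    linarith
  refine ⟨min (G z₀) (1/2), lt_min hz₀pos (by norm_num), min_le_right _ _, ?_⟩
  intro r hr u hu0 hu1
  have hur : 0 ≤ u ^ r := Real.rpow_nonneg hu0 r
  have hδ2 : min (G z₀) (1/2) ≤ 1/2 := min_le_right _ _
  rcases le_total r R with hrR | hrR
  · -- compact range: use the min of G
    have hmem : (r, u) ∈ K := by
      simp only [hK, mem_prod, mem_Icc]
      exact ⟨⟨hr, hrR⟩, hu0, hu1⟩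
    have hle : G z₀ ≤ G (r, u) := hz₀min hmem
    have hu1' : u ^ r ≤ 1 :=
      Real.rpow_le_one hu0 (by linarith) (by linarith)
    have hδG : min (G z₀) (1/2) ≤ G z₀ := min_le_left _ _
    have hδ0 : (0:ℝ) < min (G z₀) (1/2) := lt_min hz₀pos (by norm_num)
    have hmul : min (G z₀) (1/2) * ((1 + u ^ r)/2) ≤ min (G z₀) (1/2) * 1 :=
      mul_le_mul_of_nonneg_left (by linarith) hδ0.le
    have hle2 : G (r, u) = (1 + u ^ r)/2 - ((1 + u)/2) ^ r := rfl
    rw [hle2] at hle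
    nlinarith
  · -- large exponent: geometric decay
    have hb0 : (0:ℝ) < 1 - ε/2 := by linarith
    have hnR : (n:ℝ) ≤ r := le_trans (le_max_right r₀ n) hrR
    have h1 : ((1 + u)/2) ^ r ≤ (1 - ε/2) ^ r :=
      Real.rpow_le_rpow (by linarith) (by linarith) (by linarith)
    have h2 : (1 - ε/2) ^ r ≤ (1 - ε/2) ^ (n:ℝ) :=
      Real.rpow_le_rpow_of_exponent_ge hb0 (by linarith) hnR
    have h3 : (1 - ε/2) ^ (n:ℝ) = (1 - ε/2) ^ n := Real.rpow_natCast _ n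
    nlinarith

lemma scale_step (r δ s t : ℝ) (hs : 0 ≤ s) (ht : 0 < t)
    (h : ((1 + s/t)/2) ^ r ≤ (1 - δ) * ((1 + (s/t) ^ r)/2)) :
    ((t + s)/2) ^ r ≤ (1 - δ) * ((t ^ r + s ^ r)/2) := by
  have hu : 0 ≤ s/t := div_nonneg hs ht.le
  have htr : 0 ≤ t ^ r := Real.rpow_nonneg ht.le r
  have h1 : (t + s)/2 = t * ((1 + s/t)/2) := by field_simp
  have h2 : s = t * (s/t) := by field_simp
  calc ((t + s)/2) ^ r = t ^ r * ((1 + s/t)/2) ^ r := by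
        rw [h1, Real.mul_rpow ht.le (by linarith)]
    _ ≤ t ^ r * ((1 - δ) * ((1 + (s/t) ^ r)/2)) := mul_le_mul_of_nonneg_left h htr
    _ = (1 - δ) * ((t ^ r + t ^ r * (s/t) ^ r)/2) := by ring
    _ = (1 - δ) * ((t ^ r + s ^ r)/2) := by
        rw [← Real.mul_rpow ht.le hu, ← h2]

end DoublePhaseAux


/-- Uniform convexity of the double phase integrand
`H(x,t) = t^{p(x)} + μ(x) t^{q(x)}` with variable exponents. -/
theorem double_phase_uniformly_convex (N : ℕ)
    (Ω : Set (EuclideanSpace ℝ (Fin N)))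
    (p q w : EuclideanSpace ℝ (Fin N) → ℝ)
    (hpmeas : Measurable p) (hqmeas : Measurable q) (hwmeas : Measurable w)
    (hw : ∀ x ∈ Ω, 0 ≤ w x)
    (pm qm : ℝ) (hpm : 1 < pm) (hqm : 1 < qm)
    (hp : ∀ x ∈ Ω, pm ≤ p x) (hq : ∀ x ∈ Ω, qm ≤ q x)
    (hpq : ∀ x ∈ Ω, p x < q x)
    (ε : ℝ) (hε : 0 < ε) :
    ∃ δ : ℝ, 0 < δ ∧ ∀ s t : ℝ, 0 ≤ s → 0 ≤ t → ε * max t s < |t - s| →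
      ∀ᵐ x ∂(volume.restrict Ω),
        ((t + s) / 2) ^ p x + w x * ((t + s) / 2) ^ q x ≤
          (1 - δ) * ((t ^ p x + w x * t ^ q x + s ^ p x + w x * s ^ q x) / 2) := by
  set ε' : ℝ := min ε (1/2) with hε'
  have hε'0 : 0 < ε' := lt_min hε (by norm_num)
  have hε'2 : ε' ≤ 1/2 := min_le_right _ _
  set r₀ : ℝ := min pm qm with hr₀def
  have hr₀ : 1 < r₀ := lt_min hpm hqm
  obtain ⟨δ, hδ0, hδhalf, hkey⟩ := key_unif r₀ ε' hr₀ hε'0 hε'2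
  refine ⟨δ, hδ0, ?_⟩
  intro s t hs ht hst
  -- the good measurable set
  set Gd : Set (EuclideanSpace ℝ (Fin N)) :=
    {x | pm ≤ p x ∧ qm ≤ q x ∧ 0 ≤ w x} with hGd
  have hGdmeas : MeasurableSet Gd := by
    have h1 : MeasurableSet {x | pm ≤ p x} := hpmeas measurableSet_Ici
    have h2 : MeasurableSet {x | qm ≤ q x} := hqmeas measurableSet_Ici
    have h3 : MeasurableSet {x | 0 ≤ w x} := hwmeas measurableSet_Ici
    exact (h1.inter (h2.inter h3) : _)
  have hΩG : Ω ⊆ Gd := fun x hx => ⟨hp x hx, hq x hx, hw x hx⟩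
  have hae : ∀ᵐ x ∂(volume.restrict Ω), x ∈ Gd := by
    rw [MeasureTheory.ae_iff]
    have : {x | ¬ x ∈ Gd} = Gdᶜ := rfl
    rw [this, Measure.restrict_apply hGdmeas.compl]
    have h0 : Gdᶜ ∩ Ω = ∅ := by
      ext x; simp only [Set.mem_inter_iff, Set.mem_compl_iff, Set.mem_empty_iff_false,
        iff_false, not_and]
      intro hxc hxΩ; exact hxc (hΩG hxΩ)
    rw [h0]; exact measure_empty
  filter_upwards [hae] with x hx
  obtain ⟨hpx, hqx, hwx⟩ := hx
  have hrp : r₀ ≤ p x := le_trans (min_le_left _ _) hpx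
  have hrq : r₀ ≤ q x := le_trans (min_le_right _ _) hqx
  -- wlog s ≤ t
  rcases le_total s t with hst' | hst'
  · have ht0 : 0 < t := by
      rcases lt_or_eq_of_le ht with h | h
      · exact h
      · exfalso
        have hs0 : s = 0 := le_antisymm (h ▸ hst') hs
        rw [← h, hs0] at hst
        simp at hst
    have habs : |t - s| = t - s := abs_of_nonneg (by linarith)
    have hmax : max t s = t := max_eq_left hst'
    rw [habs, hmax] at hst
    have hεε' : ε' * t ≤ ε * t := mul_le_mul_of_nonneg_right (min_le_left _ _) ht
    have hu1 : s / t ≤ 1 - ε' := by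
      rw [div_le_iff₀ ht0]
      nlinarith
    have hu0 : 0 ≤ s / t := div_nonneg hs ht0.le
    have hA := scale_step (p x) δ s t hs ht0 (hkey (p x) hrp (s/t) hu0 hu1)
    have hB := scale_step (q x) δ s t hs ht0 (hkey (q x) hrq (s/t) hu0 hu1)
    have hB' := mul_le_mul_of_nonneg_left hB hwx
    nlinarith
  · have ht0 : 0 < s := by
      rcases lt_or_eq_of_le hs with h | h
      · exact h
      · exfalso
        have hs0 : t = 0 := le_antisymm (h ▸ hst') ht
        rw [← h, hs0] at hst
        simp at hst
    have habs : |t - s| = s - t := by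
      rw [abs_of_nonpos (by linarith : t - s ≤ 0)]; ring
    have hmax : max t s = s := max_eq_right hst'
    rw [habs, hmax] at hst
    have hεε' : ε' * s ≤ ε * s := mul_le_mul_of_nonneg_right (min_le_left _ _) hs
    have hu1 : t / s ≤ 1 - ε' := by
      rw [div_le_iff₀ ht0]
      nlinarith
    have hu0 : 0 ≤ t / s := div_nonneg ht ht0.le
    have hA := scale_step (p x) δ t s ht ht0 (hkey (p x) hrp (t/s) hu0 hu1)
    have hB := scale_step (q x) δ t s ht ht0 (hkey (q x) hrq (t/s) hu0 hu1)
    have hB' := mul_le_mul_of_nonneg_left hB hwx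
    have hcomm : t + s = s + t := add_comm t s
    rw [hcomm]
    nlinarith
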